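/- Let R be a left small ring, let E be a nonzero injective left R-module, and let λ be the cardinality of some generating set of E. Then λ is infinite, and the direct sum R^{(λ)} of λ copies of R is not a small left R-module. -/

import Mathlib

universe u

/-- A left `R`-module `K` is a *small module* if there exist a left `R`-module `L` and an
injective `R`-linear map `f : K → L` whose image is a superfluous submodule of `L`. -/
def IsSmallModule (R : Type u) [Ring R] (K : Type u) [AddCommGroup K] [Module R K] : Prop :=
  ∃ (L : Type u) (_ : AddCommGroup L) (_ : Module R L) (f : K →ₗ[R] L),
    Function.Injective f ∧
      ∀ X : Submodule R L, LinearMap.range f ⊔ X = ⊤ → X = ⊤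

section Aux

variable {R : Type u} [Ring R]

/-- A submodule is superfluous if it only supplements `⊤`. -/
def Sfl {L : Type*} [AddCommGroup L] [Module R L] (X : Submodule R L) : Prop :=
  ∀ Y : Submodule R L, X ⊔ Y = ⊤ → Y = ⊤

lemma sfl_bot {L : Type*} [AddCommGroup L] [Module R L] : Sfl (⊥ : Submodule R L) := by
  intro Y hY; simpa using hY

lemma sfl_mono {L : Type*} [AddCommGroup L] [Module R L] {X S : Submodule R L}
    (hXS : X ≤ S) (hS : Sfl S) : Sfl X := by
  intro Y hY
  exact hS Y (top_unique (hY ▸ sup_le_sup_right hXS Y))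

lemma sfl_sup {L : Type*} [AddCommGroup L] [Module R L] {X Y : Submodule R L}
    (hX : Sfl X) (hY : Sfl Y) : Sfl (X ⊔ Y) := by
  intro Z hZ
  rw [sup_assoc] at hZ
  exact hY Z (hX _ hZ)

lemma sfl_map {L M : Type*} [AddCommGroup L] [Module R L] [AddCommGroup M] [Module R M]
    (g : L →ₗ[R] M) {X : Submodule R L} (hX : Sfl X) : Sfl (X.map g) := by
  intro Y hY
  have h1 : X ⊔ Y.comap g = ⊤ := by
    rw [eq_top_iff]
    intro l _
    have hl : g l ∈ X.map g ⊔ Y := hY ▸ Submodule.mem_top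
    obtain ⟨x, hx, y, hy, hxy⟩ := Submodule.mem_sup.mp hl
    obtain ⟨x', hx', rfl⟩ := hx
    have : l - x' ∈ Y.comap g := by
      simp only [Submodule.mem_comap, map_sub]
      have : g l - g x' = y := by rw [← hxy]; abel
      rw [this]; exact hy
    have : l = x' + (l - x') := by abel
    rw [this]
    exact Submodule.add_mem_sup hx' (by simpa using ‹l - x' ∈ Y.comap g›)
  have h2 : Y.comap g = ⊤ := hX _ h1
  have hrange : LinearMap.range g ≤ Y := by
    rintro _ ⟨l, rfl⟩
    have : l ∈ Y.comap g := h2 ▸ Submodule.mem_top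
    exact this
  rw [eq_top_iff, ← hY]
  refine sup_le ?_ le_rfl
  rintro _ ⟨x', -, rfl⟩
  exact hrange ⟨x', rfl⟩

lemma sfl_iSup {L : Type*} [AddCommGroup L] [Module R L] {ι : Type*} [Fintype ι]
    (p : ι → Submodule R L) (hp : ∀ i, Sfl (p i)) : Sfl (⨆ i, p i) := by
  have : ∀ t : Finset ι, Sfl (t.sup p) := by
    intro t
    refine Finset.sup_induction sfl_bot (fun a ha b hb => sfl_sup ha hb) (fun i _ => hp i)
  have h := this Finset.univ
  rwa [Finset.sup_univ_eq_iSup] at h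

/-- quotient of a small module is small -/
lemma isSmallModule_of_surjective {K K' : Type u} [AddCommGroup K] [Module R K]
    [AddCommGroup K'] [Module R K'] (hK : IsSmallModule R K) (g : K →ₗ[R] K')
    (hg : Function.Surjective g) : IsSmallModule R K' := by
  obtain ⟨L, _, _, f, hf, hsfl⟩ := hK
  set N : Submodule R L := (LinearMap.ker g).map f with hN
  refine ⟨L ⧸ N, inferInstance, inferInstance, ?_⟩
  have hle : LinearMap.ker g ≤ N.comap f := by
    intro k hk
    exact Submodule.mem_map_of_mem hk
  set q : (K ⧸ LinearMap.ker g) →ₗ[R] L ⧸ N := Submodule.mapQ _ N f hle with hq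
  set e : (K ⧸ LinearMap.ker g) ≃ₗ[R] K' := g.quotKerEquivOfSurjective hg with he
  refine ⟨q.comp (e.symm : K' →ₗ[R] (K ⧸ LinearMap.ker g)), ?_, ?_⟩
  · -- injectivity
    have hqinj : Function.Injective q := by
      rw [← LinearMap.ker_eq_bot, eq_bot_iff]
      intro x hx
      induction x using Submodule.Quotient.induction_on with
      | H k =>
        have : f k ∈ N := by
          simpa [hq, Submodule.mapQ_apply, Submodule.Quotient.mk_eq_zero] using hx
        obtain ⟨k', hk', hkk'⟩ := this
        have : k' = k := hf hkk'
        subst this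
        simpa [Submodule.Quotient.mk_eq_zero] using hk'
    exact hqinj.comp e.symm.injective
  · -- superfluous range
    intro X hX
    have hrange : LinearMap.range (q.comp (e.symm : K' →ₗ[R] (K ⧸ LinearMap.ker g)))
        = (LinearMap.range f).map N.mkQ := by
      rw [LinearMap.range_comp, LinearEquiv.range, Submodule.map_top]
      apply le_antisymm
      · rintro _ ⟨x, rfl⟩
        induction x using Submodule.Quotient.induction_on with
        | H k =>
          refine ⟨f k, ⟨k, rfl⟩, ?_⟩
          simp [hq, Submodule.mapQ_apply]
      · rintro _ ⟨_, ⟨k, rfl⟩, rfl⟩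
        exact ⟨Submodule.Quotient.mk k, by simp [hq, Submodule.mapQ_apply]⟩
    rw [hrange] at hX
    exact sfl_map N.mkQ (hsfl : Sfl (LinearMap.range f)) X hX

/-- a nontrivial injective module is not small -/
lemma not_isSmallModule_of_injective {E : Type u} [AddCommGroup E] [Module R E] [Nontrivial E]
    (hE : Module.Injective R E) : ¬ IsSmallModule R E := by
  rintro ⟨L, _, _, f, hf, hsfl⟩
  obtain ⟨r, hr⟩ := hE.out f hf LinearMap.id
  have hsup : LinearMap.range f ⊔ LinearMap.ker r = ⊤ := by
    rw [eq_top_iff]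
    intro l _
    have h1 : f (r l) ∈ LinearMap.range f := ⟨r l, rfl⟩
    have h2 : l - f (r l) ∈ LinearMap.ker r := by
      simp only [LinearMap.mem_ker, map_sub]
      rw [hr (r l)]
      simp
    have : l = f (r l) + (l - f (r l)) := by abel
    rw [this]
    exact Submodule.add_mem_sup h1 h2
  have hker : LinearMap.ker r = ⊤ := hsfl _ hsup
  obtain ⟨x, y, hxy⟩ := exists_pair_ne E
  apply hxy
  have hx : f x ∈ LinearMap.ker r := hker ▸ Submodule.mem_top
  have hy : f y ∈ LinearMap.ker r := hker ▸ Submodule.mem_top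
  have hx' : x = 0 := by
    have h := hr x; simp only [LinearMap.id_coe, id_eq] at h
    rw [← h]; exact LinearMap.mem_ker.mp hx
  have hy' : y = 0 := by
    have h := hr y; simp only [LinearMap.id_coe, id_eq] at h
    rw [← h]; exact LinearMap.mem_ker.mp hy
  rw [hx', hy']

/-- finite direct sums of a small module are small -/
lemma isSmallModule_finsupp {ι : Type u} [Fintype ι] (hR : IsSmallModule R R) :
    IsSmallModule R (ι →₀ R) := by
  obtain ⟨L, _, _, f, hf, hsfl⟩ := hR
  refine ⟨ι →₀ L, inferInstance, inferInstance, Finsupp.mapRange.linearMap f, ?_, ?_⟩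
  · intro x y hxy
    ext a
    exact hf (by simpa [Finsupp.mapRange.linearMap_apply] using congrArg (fun z => z a) hxy)
  · set S : Submodule R (ι →₀ L) :=
      ⨆ i : ι, (LinearMap.range f).map (Finsupp.lsingle i) with hS
    have hSsfl : Sfl S :=
      sfl_iSup _ (fun i => sfl_map (Finsupp.lsingle i) (hsfl : Sfl (LinearMap.range f)))
    have hle : LinearMap.range (Finsupp.mapRange.linearMap (α := ι) f) ≤ S := by
      rintro _ ⟨y, rfl⟩
      induction y using Finsupp.induction_linear with
      | zero => simp
      | add a b ha hb =>
        rw [map_add]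
        exact S.add_mem ha hb
      | single a b =>
        have : (Finsupp.mapRange.linearMap (α := ι) f) (Finsupp.single a b)
            = Finsupp.single a (f b) := by
          simp [Finsupp.mapRange.linearMap_apply]
        rw [this]
        exact Submodule.mem_iSup_of_mem a ⟨f b, ⟨b, rfl⟩, rfl⟩
    exact sfl_mono hle hSsfl

end Aux

/-- If `R` is a left small ring, `E` is a nonzero injective left `R`-module and `λ = #s` is the
cardinality of a generating set `s` of `E`, then `λ` is infinite and the direct sum of `λ` copies
of `R` is not a small left `R`-module. -/
theorem stmt_4 (R : Type u) [Ring R] (hR : IsSmallModule R R)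
    (E : Type u) [AddCommGroup E] [Module R E] [Nontrivial E] (hE : Module.Injective R E)
    (s : Set E) (hs : Submodule.span R s = ⊤) :
    Cardinal.aleph0 ≤ Cardinal.mk s ∧ ¬ IsSmallModule R (s →₀ R) := by
  have hEnot : ¬ IsSmallModule R E := not_isSmallModule_of_injective hE
  set T : (s →₀ R) →ₗ[R] E := Finsupp.linearCombination R ((↑) : s → E) with hT
  have hTsurj : Function.Surjective T := by
    rw [← LinearMap.range_eq_top, hT, Finsupp.range_linearCombination, Subtype.range_coe, hs]
  have hnot : ¬ IsSmallModule R (s →₀ R) := fun h =>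
    hEnot (isSmallModule_of_surjective h T hTsurj)
  refine ⟨?_, hnot⟩
  by_contra hcard
  rw [not_le] at hcard
  have hfin : s.Finite := Cardinal.lt_aleph0_iff_set_finite.mp hcard
  have : Fintype s := hfin.fintype
  exact hnot (isSmallModule_finsupp hR)
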